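/- Let (A, m) be a local ring, J and J' nonzero proper ideals of B and C respectively with J × J' ⊆ Jac(B × C). If the bi-amalgamation A ⋈^{f,g} (J, J') is Gaussian, then the subrings f(A)+J of B and g(A)+J' of C are Gaussian. -/
import Mathlib


/-- The content ideal of a polynomial: the ideal generated by its coefficients. -/
noncomputable def contentIdeal {R : Type*} [CommRing R] (p : Polynomial R) : Ideal R :=
  Ideal.span (Set.range p.coeff)

/-- A commutative ring is Gaussian if `c(pq) = c(p)c(q)` for all polynomials. -/
def IsGaussianRing (R : Type*) [CommRing R] : Prop :=
  ∀ p q : Polynomial R, contentIdeal (p * q) = contentIdeal p * contentIdeal q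

lemma contentIdeal_map {R S : Type*} [CommRing R] [CommRing S] (φ : R →+* S)
    (p : Polynomial R) : contentIdeal (p.map φ) = (contentIdeal p).map φ := by
  unfold contentIdeal
  have h : (p.map φ).coeff = φ ∘ p.coeff := funext fun n => Polynomial.coeff_map φ n
  rw [Ideal.map_span, h, Set.range_comp]

lemma isGaussianRing_of_surjective {R S : Type*} [CommRing R] [CommRing S] (φ : R →+* S)
    (hφ : Function.Surjective φ) (hR : IsGaussianRing R) : IsGaussianRing S := by
  intro P Q
  obtain ⟨p, rfl⟩ := Polynomial.map_surjective φ hφ P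
  obtain ⟨q, rfl⟩ := Polynomial.map_surjective φ hφ Q
  rw [← Polynomial.map_mul, contentIdeal_map, contentIdeal_map, contentIdeal_map,
    hR p q, Ideal.map_mul]

/-- if `(A,m)` is local, `J, J'` nonzero proper with `J × J' ⊆ Jac(B × C)`,
and the bi-amalgamation is Gaussian, then `f(A)+J` and `g(A)+J'` are Gaussian. -/
theorem biAmalgamation_gaussian_imp_subrings_gaussian
    {A B C : Type*} [CommRing A] [CommRing B] [CommRing C] [IsLocalRing A]
    (f : A →+* B) (g : A →+* C) (J : Ideal B) (J' : Ideal C)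
    (hcomap : J.comap f = J'.comap g)
    (hJ0 : J ≠ ⊥) (hJt : J ≠ ⊤) (hJ'0 : J' ≠ ⊥) (hJ't : J' ≠ ⊤)
    (hJac : J.prod J' ≤ (⊥ : Ideal (B × C)).jacobson) :
    ∀ S : Subring (B × C),
      (S : Set (B × C)) =
        {x | ∃ a : A, ∃ j ∈ J, ∃ j' ∈ J', x = (f a + j, g a + j')} →
      IsGaussianRing S →
      (∀ T₁ : Subring B, (T₁ : Set B) = {b | ∃ a : A, ∃ j ∈ J, b = f a + j} →
          IsGaussianRing T₁) ∧
      (∀ T₂ : Subring C, (T₂ : Set C) = {c | ∃ a : A, ∃ j' ∈ J', c = g a + j'} →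
          IsGaussianRing T₂) := by
  intro S hS hSg
  constructor
  · intro T₁ hT₁
    have hmem : ∀ x : S, (x : B × C).1 ∈ T₁ := by
      intro x
      have hx : (x : B × C) ∈ (S : Set (B × C)) := x.2
      rw [hS] at hx
      obtain ⟨a, j, hj, j', hj', hx⟩ := hx
      rw [← SetLike.mem_coe, hT₁]
      exact ⟨a, j, hj, by rw [hx]⟩
    refine isGaussianRing_of_surjective
      (((RingHom.fst B C).comp S.subtype).codRestrict T₁ hmem) ?_ hSg
    intro t
    have ht : (t : B) ∈ (T₁ : Set B) := t.2
    rw [hT₁] at ht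
    obtain ⟨a, j, hj, ht⟩ := ht
    have hmemS : ((f a + j, g a + 0) : B × C) ∈ S := by
      rw [← SetLike.mem_coe, hS]
      exact ⟨a, j, hj, 0, J'.zero_mem, rfl⟩
    exact ⟨⟨_, hmemS⟩, by ext; simp [RingHom.codRestrict, ht]⟩
  · intro T₂ hT₂
    have hmem : ∀ x : S, (x : B × C).2 ∈ T₂ := by
      intro x
      have hx : (x : B × C) ∈ (S : Set (B × C)) := x.2
      rw [hS] at hx
      obtain ⟨a, j, hj, j', hj', hx⟩ := hx
      rw [← SetLike.mem_coe, hT₂]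
      exact ⟨a, j', hj', by rw [hx]⟩
    refine isGaussianRing_of_surjective
      (((RingHom.snd B C).comp S.subtype).codRestrict T₂ hmem) ?_ hSg
    intro t
    have ht : (t : C) ∈ (T₂ : Set C) := t.2
    rw [hT₂] at ht
    obtain ⟨a, j', hj', ht⟩ := ht
    have hmemS : ((f a + 0, g a + j') : B × C) ∈ S := by
      rw [← SetLike.mem_coe, hS]
      exact ⟨a, 0, J.zero_mem, j', hj', rfl⟩
    exact ⟨⟨_, hmemS⟩, by ext; simp [RingHom.codRestrict, ht]⟩
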